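/- Let R be a semistandard Young tableau and a, a' positive integers. Perform Schensted (transpose/column-style) row insertion of a into R, obtaining bumping route ρ and new box B, then insert a' into the result, obtaining bumping route ρ' and new box B'. If a ≥ a', then ρ' is weakly left of ρ and B' is strictly below B. If a < a', then ρ is strictly left of ρ' and B is weakly below B'. -/

import Mathlib

/-- A semistandard Young tableau (allowing trailing empty rows). -/
def IsSSYT (T : List (List ℕ)) : Prop :=
  (∀ r ∈ T, List.Chain' (· < ·) r) ∧
  (∀ i, (T.getD (i + 1) []).length ≤ (T.getD i []).length) ∧
  (∀ i j, j < (T.getD (i + 1) []).length →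
    (T.getD i []).getD j 0 ≤ (T.getD (i + 1) []).getD j 0)

/-- Schensted (transpose/column-style) row insertion.  Returns the new tableau
together with the bumping route, recorded as the list of column indices of the
boxes of the route (the entry for row `i` is the `i`-th member of the list);
the last member of the list is the column of the new box, which lies in row
`(route.length - 1)`. -/
def ins : List (List ℕ) → ℕ → List (List ℕ) × List ℕ
  | [], a => ([[a]], [0])
  | r :: rs, a =>
    match r.findIdx? (fun x => decide (a ≤ x)) with
    | none => ((r ++ [a]) :: rs, [r.length])
    | some j =>
      let p := ins rs (r.getD j 0)
      ((r.set j a) :: p.1, j :: p.2)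

lemma ins_snd_pos (T : List (List ℕ)) (x : ℕ) : 0 < (ins T x).2.length := by
  cases T with
  | nil => simp [ins]
  | cons r rs =>
    cases h : r.findIdx? (fun y => decide (x ≤ y)) with
    | none => simp [ins, h]
    | some j => simp [ins, h]

lemma ins_cons_none (r : List ℕ) (rs : List (List ℕ)) (a : ℕ)
    (h : r.findIdx? (fun x => decide (a ≤ x)) = none) :
    ins (r :: rs) a = ((r ++ [a]) :: rs, [r.length]) := by
  conv_lhs => unfold ins
  rw [h]

lemma ins_cons_some (r : List ℕ) (rs : List (List ℕ)) (a j : ℕ)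
    (h : r.findIdx? (fun x => decide (a ≤ x)) = some j) :
    ins (r :: rs) a =
      ((r.set j a) :: (ins rs (r.getD j 0)).1, j :: (ins rs (r.getD j 0)).2) := by
  conv_lhs => unfold ins
  rw [h]

lemma bumping_aux (R : List (List ℕ)) (hR : ∀ r ∈ R, List.Chain' (· < ·) r)
    (a a' : ℕ) :
    (a' ≤ a →
      (∀ i, i < (ins R a).2.length →
        i < (ins (ins R a).1 a').2.length ∧
          ((ins (ins R a).1 a').2.getD i 0 ≤ (ins R a).2.getD i 0)) ∧
      (ins R a).2.length < (ins (ins R a).1 a').2.length) ∧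
    (a < a' →
      (∀ i, i < (ins (ins R a).1 a').2.length →
        i < (ins R a).2.length ∧
          ((ins R a).2.getD i 0 < (ins (ins R a).1 a').2.getD i 0)) ∧
      (ins (ins R a).1 a').2.length ≤ (ins R a).2.length) := by
  induction R generalizing a a' with
  | nil =>
    constructor
    · intro hle
      have h2 : [a].findIdx? (fun x => decide (a' ≤ x)) = some 0 := by
        simp [List.findIdx?, List.findIdx?.go, hle]
      simp [ins, h2]
    · intro hlt
      have h2 : [a].findIdx? (fun x => decide (a' ≤ x)) = none := by
        simp [List.findIdx?, List.findIdx?.go, Nat.not_le.mpr hlt]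
      simp [ins, h2]
  | cons r rs ih =>
    have hr : List.Chain' (· < ·) r := hR r (by simp)
    have hrs : ∀ q ∈ rs, List.Chain' (· < ·) q := fun q hq => hR q (by simp [hq])
    have hmono : ∀ (k j : ℕ) (hkj : k < j) (hj : j < r.length),
        r[k]'(Nat.lt_trans hkj hj) < r[j] := by
      have hp := List.pairwise_iff_getElem.mp (List.isChain_iff_pairwise.mp hr)
      intro k j hkj hj
      exact hp k j (by omega) hj hkj
    cases hfind : r.findIdx? (fun x => decide (a ≤ x)) with
    | none =>
      have hall : ∀ x ∈ r, x < a := by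
        intro x hx
        have := List.findIdx?_eq_none_iff.mp hfind x hx
        simpa using this
      have e1 : ins (r :: rs) a = ((r ++ [a]) :: rs, [r.length]) :=
        ins_cons_none r rs a hfind
      constructor
      · intro hle
        have hne : (r ++ [a]).findIdx? (fun x => decide (a' ≤ x)) ≠ none := by
          intro h
          have := List.findIdx?_eq_none_iff.mp h a (by simp)
          simp [hle] at this
        cases hfind2 : (r ++ [a]).findIdx? (fun x => decide (a' ≤ x)) with
        | none => exact absurd hfind2 hne
        | some j' =>
          obtain ⟨hj', _, _⟩ := List.findIdx?_eq_some_iff_getElem.mp hfind2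
          have hj'le : j' ≤ r.length := by simpa using Nat.lt_succ_iff.mp (by simpa using hj')
          have e2 : ins ((r ++ [a]) :: rs) a' =
              (((r ++ [a]).set j' a') :: (ins rs ((r ++ [a]).getD j' 0)).1,
                j' :: (ins rs ((r ++ [a]).getD j' 0)).2) :=
            ins_cons_some _ _ _ _ hfind2
          rw [e1, e2]
          refine ⟨?_, ?_⟩
          · intro i hi
            simp only [List.length_singleton] at hi
            interval_cases i
            simpa using hj'le
          · simpa using ins_snd_pos rs ((r ++ [a]).getD j' 0)
      · intro hlt
        have hfind2 : (r ++ [a]).findIdx? (fun x => decide (a' ≤ x)) = none := by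
          rw [List.findIdx?_eq_none_iff]
          intro x hx
          rcases List.mem_append.mp hx with h | h
          · simpa using Nat.not_le.mpr (lt_trans (hall x h) hlt)
          · simp at h; subst h; simpa using Nat.not_le.mpr hlt
        have e2 : ins ((r ++ [a]) :: rs) a' =
            (((r ++ [a]) ++ [a']) :: rs, [(r ++ [a]).length]) :=
          ins_cons_none _ _ _ hfind2
        rw [e1, e2]
        constructor
        · intro i hi
          simp only [List.length_singleton] at hi
          interval_cases i
          simp
        · simp
    | some j =>
      obtain ⟨hj, hpj, hminj⟩ := List.findIdx?_eq_some_iff_getElem.mp hfind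
      have hpj' : a ≤ r[j] := by simpa using hpj
      have hminj' : ∀ (k : ℕ) (hk : k < j), r[k]'(Nat.lt_trans hk hj) < a := by
        intro k hk
        have := hminj k hk
        simpa using this
      set b := r.getD j 0 with hb
      have hbval : b = r[j] := List.getD_eq_getElem r 0 hj
      have e1 : ins (r :: rs) a = ((r.set j a) :: (ins rs b).1, j :: (ins rs b).2) :=
        ins_cons_some _ _ _ _ hfind
      have hsetlen : (r.set j a).length = r.length := by simp
      have hsetj : (r.set j a).getD j 0 = a := by
        rw [List.getD_eq_getElem _ _ (by simpa using hj), List.getElem_set]; simp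
      have hsetk : ∀ (k : ℕ) (hk : k < r.length), k ≠ j → (r.set j a).getD k 0 = r[k]'hk := by
        intro k hk hkj
        rw [List.getD_eq_getElem _ _ (by simpa using hk), List.getElem_set]
        simp [Ne.symm hkj]
      constructor
      · intro hle
        have hne : (r.set j a).findIdx? (fun x => decide (a' ≤ x)) ≠ none := by
          intro h
          have hmem : a ∈ r.set j a := by
            have h0 : (r.set j a)[j]'(by simpa using hj) ∈ r.set j a := List.getElem_mem _
            simpa [List.getElem_set] using h0
          have := List.findIdx?_eq_none_iff.mp h a hmem
          simp [hle] at this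
        cases hfind2 : (r.set j a).findIdx? (fun x => decide (a' ≤ x)) with
        | none => exact absurd hfind2 hne
        | some j' =>
          obtain ⟨hj', hpj2, hminj2⟩ := List.findIdx?_eq_some_iff_getElem.mp hfind2
          have hj'le : j' ≤ j := by
            by_contra h
            have := hminj2 j (by omega)
            rw [List.getElem_set] at this
            simp [hle] at this
          set b' := (r.set j a).getD j' 0 with hb'
          have hb'le : b' ≤ b := by
            rcases eq_or_lt_of_le hj'le with h | h
            · subst h; rw [hb', hsetj, hbval]; exact hpj'
            · rw [hb', hsetk j' (by omega) (by omega), hbval]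
              exact le_of_lt (hmono j' j h hj)
          have e2 : ins ((r.set j a) :: (ins rs b).1) a' =
              (((r.set j a).set j' a') :: (ins (ins rs b).1 b').1,
                j' :: (ins (ins rs b).1 b').2) := by
            rw [hb']; exact ins_cons_some _ _ _ _ hfind2
          obtain ⟨H1, H2⟩ := (ih hrs b b').1 hb'le
          rw [e1, e2]
          refine ⟨?_, ?_⟩
          · intro i hi
            cases i with
            | zero => exact ⟨by simp, by simpa using hj'le⟩
            | succ n =>
              simp only [List.length_cons, Nat.succ_lt_succ_iff] at hi ⊢
              obtain ⟨h1, h2⟩ := H1 n hi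
              exact ⟨h1, by simpa using h2⟩
          · simpa using H2
      · intro hlt
        cases hfind2 : (r.set j a).findIdx? (fun x => decide (a' ≤ x)) with
        | none =>
          have e2 : ins ((r.set j a) :: (ins rs b).1) a' =
              (((r.set j a) ++ [a']) :: (ins rs b).1, [(r.set j a).length]) :=
            ins_cons_none _ _ _ hfind2
          rw [e1, e2]
          constructor
          · intro i hi
            simp only [List.length_singleton] at hi
            interval_cases i
            refine ⟨by simp, ?_⟩
            simpa [hsetlen] using hj
          · simp
        | some j' =>
          obtain ⟨hj', hpj2, hminj2⟩ := List.findIdx?_eq_some_iff_getElem.mp hfind2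
          have hjlt : j < j' := by
            by_contra h
            push_neg at h
            rcases eq_or_lt_of_le h with h' | h'
            · subst h'
              rw [List.getElem_set] at hpj2
              simp at hpj2
              omega
            · have := hpj2
              rw [List.getElem_set] at this
              simp [Nat.ne_of_gt h'] at this
              have := hminj' j' h'
              omega
          set b' := (r.set j a).getD j' 0 with hb'
          have hj'r : j' < r.length := by simpa using hj'
          have hb'gt : b < b' := by
            rw [hb', hsetk j' hj'r (by omega), hbval]
            exact hmono j j' hjlt hj'r
          have e2 : ins ((r.set j a) :: (ins rs b).1) a' =
              (((r.set j a).set j' a') :: (ins (ins rs b).1 b').1,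
                j' :: (ins (ins rs b).1 b').2) := by
            rw [hb']; exact ins_cons_some _ _ _ _ hfind2
          obtain ⟨H1, H2⟩ := (ih hrs b b').2 hb'gt
          rw [e1, e2]
          refine ⟨?_, ?_⟩
          · intro i hi
            cases i with
            | zero => exact ⟨by simp, by simpa using hjlt⟩
            | succ n =>
              simp only [List.length_cons, Nat.succ_lt_succ_iff] at hi ⊢
              obtain ⟨h1, h2⟩ := H1 n hi
              exact ⟨h1, by simpa using h2⟩
          · simpa using H2

/-- Row bumping lemma: insert `a` into `R` (route `ρ`), then `a'` into the
result (route `ρ'`).  If `a ≥ a'` then `ρ'` is weakly left of `ρ` and the new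
box of `ρ'` is strictly below that of `ρ`; if `a < a'` then `ρ` is strictly
left of `ρ'` and the new box of `ρ` is weakly below that of `ρ'`. -/
theorem bumping_routes (R : List (List ℕ)) (hR : IsSSYT R)
    (hpos : ∀ r ∈ R, ∀ x ∈ r, 0 < x) (a a' : ℕ) (ha : 0 < a) (ha' : 0 < a') :
    (a' ≤ a →
      (∀ i, i < (ins R a).2.length →
        i < (ins (ins R a).1 a').2.length ∧
          ((ins (ins R a).1 a').2.getD i 0 ≤ (ins R a).2.getD i 0)) ∧
      (ins R a).2.length < (ins (ins R a).1 a').2.length) ∧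
    (a < a' →
      (∀ i, i < (ins (ins R a).1 a').2.length →
        i < (ins R a).2.length ∧
          ((ins R a).2.getD i 0 < (ins (ins R a).1 a').2.getD i 0)) ∧
      (ins (ins R a).1 a').2.length ≤ (ins R a).2.length) :=
  bumping_aux R hR.1 a a'
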